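/- (Bohr's theorem, sharpness.) For every real number r with 1/3 < r < 1 there exist a power series Σ_{k=0}^∞ c_k z^k converging on the open unit disk with |Σ_{k=0}^∞ c_k z^k| < 1 for all |z| < 1, and a point z₀ with |z₀| < r, such that Σ_{k=0}^∞ |c_k z₀^k| ≥ 1. -/

import Mathlib

open Complex

set_option maxHeartbeats 1000000 in
theorem bohr_sharp :
    ∀ r : ℝ, 1 / 3 < r → r < 1 →
      ∃ c : ℕ → ℂ,
        (∀ z : ℂ, ‖z‖ < 1 → Summable (fun k => c k * z ^ k)) ∧
        (∀ z : ℂ, ‖z‖ < 1 → ‖∑' k, c k * z ^ k‖ < 1) ∧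
        ∃ z₀ : ℂ, ‖z₀‖ < r ∧ 1 ≤ ∑' k, (‖c k * z₀ ^ k‖₊ : ENNReal) := by
  intro r hr1 hr2
  have hr0 : (0:ℝ) < r := by linarith
  set b : ℝ := (1 - r) / (2 * r) with hb_def
  have hb0 : 0 < b := by apply div_pos <;> linarith
  have hb1 : b < 1 := by rw [hb_def, div_lt_one (by linarith)]; linarith
  set a : ℝ := (b + 1) / 2 with ha_def
  have ha0 : 0 < a := by rw [ha_def]; linarith
  have ha1 : a < 1 := by rw [ha_def]; linarith
  have hab : b < a := by rw [ha_def]; linarith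
  set t : ℝ := 1 / (1 + 2 * a) with ht_def
  have hden : (0:ℝ) < 1 + 2 * a := by linarith
  have ht0 : 0 < t := by rw [ht_def]; positivity
  have htr : t < r := by
    rw [ht_def, div_lt_iff₀ hden]
    have : (1 - r) / (2 * r) < a := hab
    rw [div_lt_iff₀ (by linarith)] at this
    nlinarith
  have ht1 : t < 1 := by rw [ht_def, div_lt_one hden]; linarith
  have hat : a * t < 1 := by nlinarith
  have htid : t * (1 + 2 * a) = 1 := by
    rw [ht_def]; field_simp
  clear_value t
  clear_value a
  clear_value b
  set c : ℕ → ℂ := fun k => if k = 0 then (a:ℂ) else -(1 - (a:ℂ)^2) * (a:ℂ)^(k-1) with hc_def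
  have hc0 : c 0 = (a:ℂ) := by simp [hc_def]
  have hcs : ∀ (z : ℂ) (n : ℕ), c (n+1) * z ^ (n+1) = (-(1 - (a:ℂ)^2) * z) * ((a:ℂ) * z) ^ n := by
    intro z n
    simp only [hc_def, Nat.succ_ne_zero, if_false, Nat.add_sub_cancel]
    ring
  have haz : ∀ z : ℂ, ‖z‖ < 1 → ‖(a:ℂ) * z‖ < 1 := by
    intro z hz
    rw [norm_mul, Complex.norm_real, Real.norm_eq_abs, abs_of_pos ha0]
    nlinarith [norm_nonneg z]
  have hsumm : ∀ z : ℂ, ‖z‖ < 1 → Summable (fun k => c k * z ^ k) := by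
    intro z hz
    apply (summable_nat_add_iff 1).1
    have := (summable_geometric_of_norm_lt_one (haz z hz)).mul_left (-(1 - (a:ℂ)^2) * z)
    simpa [hcs] using this
  refine ⟨c, hsumm, ?_, ?_⟩
  · -- norm of sum < 1
    intro z hz
    have hz1 : (a:ℂ) * z ≠ 1 := by
      intro h
      have := haz z hz
      rw [h, norm_one] at this
      exact lt_irrefl _ this
    have hw : (1 : ℂ) - (a:ℂ) * z ≠ 0 := sub_ne_zero.mpr (Ne.symm hz1)
    have hval : ∑' k, c k * z ^ k = ((a:ℂ) - z) / (1 - (a:ℂ) * z) := by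
      rw [(hsumm z hz).tsum_eq_zero_add]
      have : ∑' n : ℕ, c (n+1) * z ^ (n+1)
          = (-(1 - (a:ℂ)^2) * z) * (1 - (a:ℂ) * z)⁻¹ := by
        simp only [hcs]
        rw [tsum_mul_left, tsum_geometric_of_norm_lt_one (haz z hz)]
      rw [this, hc0]
      field_simp
      ring
    rw [hval, norm_div, div_lt_one (norm_pos_iff.mpr hw)]
    apply lt_of_pow_lt_pow_left₀ 2 (norm_nonneg _)
    have e1 : ‖(a:ℂ) - z‖^2 = Complex.normSq ((a:ℂ) - z) := by
      rw [Complex.sq_norm]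
    have e2 : ‖1 - (a:ℂ) * z‖^2 = Complex.normSq (1 - (a:ℂ) * z) := by
      rw [Complex.sq_norm]
    rw [e1, e2]
    have hz2 : z.re^2 + z.im^2 < 1 := by
      have : ‖z‖ ^ 2 < 1 := by
        nlinarith [norm_nonneg z]
      rw [Complex.sq_norm, Complex.normSq_apply] at this
      nlinarith
    simp only [Complex.normSq_apply, Complex.sub_re, Complex.sub_im, Complex.mul_re,
      Complex.mul_im, Complex.ofReal_re, Complex.ofReal_im, Complex.one_re, Complex.one_im]
    nlinarith [mul_pos (by nlinarith : (0:ℝ) < 1 - a^2)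
      (by nlinarith : (0:ℝ) < 1 - (z.re^2 + z.im^2))]
  · -- the point z₀
    refine ⟨(t:ℂ), ?_, ?_⟩
    · rw [Complex.norm_real, Real.norm_eq_abs, abs_of_pos ht0]; exact htr
    · have hnorm : ∀ k, ‖c k * (t:ℂ) ^ k‖ = if k = 0 then a else (1 - a^2) * a^(k-1) * t^k := by
        intro k
        cases k with
        | zero => simp [hc0, abs_of_pos ha0]
        | succ n =>
          rw [hcs]
          simp only [Nat.succ_ne_zero, if_false, Nat.add_sub_cancel]
          rw [norm_mul, norm_mul, norm_neg, norm_pow, norm_mul]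
          rw [Complex.norm_real, Real.norm_eq_abs, abs_of_pos ht0]
          have : ‖(1:ℂ) - (a:ℂ)^2‖ = 1 - a^2 := by
            rw [show (1:ℂ) - (a:ℂ)^2 = ((1 - a^2 : ℝ) : ℂ) by push_cast; ring,
              Complex.norm_real, Real.norm_eq_abs, abs_of_pos (by nlinarith)]
          rw [this, Complex.norm_real, Real.norm_eq_abs, abs_of_pos ha0]
          ring
      have hns : Summable (fun k => ‖c k * (t:ℂ) ^ k‖) := by
        apply (summable_nat_add_iff 1).1
        have hg : Summable (fun n : ℕ => ((1 - a^2) * t) * (a * t)^n) :=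
          (summable_geometric_of_lt_one (by positivity) hat).mul_left _
        apply hg.congr
        intro n
        rw [hnorm (n+1)]
        simp only [Nat.succ_ne_zero, if_false, Nat.add_sub_cancel]
        ring
      have hreal : ∑' k, ‖c k * (t:ℂ) ^ k‖ = 1 := by
        rw [hns.tsum_eq_zero_add]
        have h1 : ∑' n : ℕ, ‖c (n+1) * (t:ℂ) ^ (n+1)‖
            = ((1 - a^2) * t) * (1 - a*t)⁻¹ := by
          have : ∀ n : ℕ, ‖c (n+1) * (t:ℂ) ^ (n+1)‖ = ((1 - a^2) * t) * (a * t)^n := by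
            intro n
            rw [hnorm (n+1)]
            simp only [Nat.succ_ne_zero, if_false, Nat.add_sub_cancel]
            ring
          rw [tsum_congr this, tsum_mul_left, tsum_geometric_of_lt_one (by positivity) hat]
        rw [h1, hnorm 0]
        simp only [if_pos rfl, if_true]
        have key : (1 - a^2) * t = (1 - a) * (1 - a * t) := by
          linear_combination (1 - a) * htid
        rw [key]
        have : (0:ℝ) < 1 - a * t := by linarith
        field_simp
        ring
      calc (1 : ENNReal) = ENNReal.ofReal (∑' k, ‖c k * (t:ℂ) ^ k‖) := by
            rw [hreal]; simp
        _ = ∑' k, ENNReal.ofReal ‖c k * (t:ℂ) ^ k‖ :=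
            ENNReal.ofReal_tsum_of_nonneg (fun k => norm_nonneg _) hns
        _ = ∑' k, (‖c k * (t:ℂ) ^ k‖₊ : ENNReal) := by
            apply tsum_congr; intro k; exact ENNReal.ofReal_eq_coe_nnreal (norm_nonneg _)
        _ ≤ _ := le_refl _
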